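/- The map φ sending a game automorphism f of G_FL to the restriction of the induced map f̄ to c₀₀ is a group isomorphism from the automorphism group of G_FL (under composition) onto the group of bijective self-isometries of the metric space (c₀₀, d). -/

import Mathlib

universe u v w x y

namespace FraisseGames

/-- The initial segment (of length `n`) of an infinite sequence `R`. -/
def runPrefix {M : Type u} (R : ℕ → M) (n : ℕ) : List M :=
  (List.range n).map R

/-- `T` is a game tree over `M`: it is closed under initial segments, and every
moment of `T` has a one-step extension in `T`. -/
def IsGameTree {M : Type u} (T : Set (List M)) : Prop :=
  (∀ t ∈ T, ∀ k : ℕ, t.take k ∈ T) ∧ ∀ t ∈ T, ∃ x : M, t ++ [x] ∈ T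

/-- The set of runs of the tree `T`. -/
def Runs {M : Type u} (T : Set (List M)) : Set (ℕ → M) :=
  {R | ∀ n : ℕ, runPrefix R n ∈ T}

/-- A game over `M`: a game tree together with a payoff set of runs. -/
structure Game (M : Type u) : Type u where
  tree : Set (List M)
  isGameTree : IsGameTree tree
  payoff : Set (ℕ → M)
  payoff_subset : payoff ⊆ Runs tree

/-- A game is finite if its set of runs is finite. -/
def Game.IsFin {M : Type u} (G : Game M) : Prop := (Runs G.tree).Finite

/-- The subgame relation `G ≤ G'`. -/
def Game.Sub {M : Type u} (G G' : Game M) : Prop :=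
  G.tree ⊆ G'.tree ∧ G.payoff = G'.payoff ∩ Runs G.tree

/-- `f` is a chronological map from `T₁` to `T₂`: it maps `T₁` into `T₂` and it
preserves lengths and truncations of moments. -/
def Chronological {M₁ : Type u} {M₂ : Type v} (T₁ : Set (List M₁)) (T₂ : Set (List M₂))
    (f : List M₁ → List M₂) : Prop :=
  (∀ t ∈ T₁, f t ∈ T₂) ∧ (∀ t ∈ T₁, (f t).length = t.length) ∧
    ∀ t ∈ T₁, ∀ k : ℕ, f (t.take k) = (f t).take k

/-- `BarMapsTo f R S` says that the map `f̄` on runs induced by the chronological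
map `f` sends the run `R` to the run `S`, i.e. `S↾n = f (R↾n)` for all `n`. -/
def BarMapsTo {M₁ : Type u} {M₂ : Type v} (f : List M₁ → List M₂)
    (R : ℕ → M₁) (S : ℕ → M₂) : Prop :=
  ∀ n : ℕ, runPrefix S n = f (runPrefix R n)

/-- `f` is an A-morphism from `G₁` to `G₂`: a chronological map whose induced map on
runs sends runs won by Ali to runs won by Ali. -/
def IsAMorphism {M₁ : Type u} {M₂ : Type v} (G₁ : Game M₁) (G₂ : Game M₂)
    (f : List M₁ → List M₂) : Prop :=
  Chronological G₁.tree G₂.tree f ∧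
    ∀ R ∈ G₁.payoff, ∀ S : ℕ → M₂, BarMapsTo f R S → S ∈ G₂.payoff

/-- `f` is a game embedding from `G₁` to `G₂`: a chronological map, injective on the
tree, such that for every run `R` of `G₁`, `R ∈ A₁ ↔ f̄ R ∈ A₂`. -/
def IsGameEmbedding {M₁ : Type u} {M₂ : Type v} (G₁ : Game M₁) (G₂ : Game M₂)
    (f : List M₁ → List M₂) : Prop :=
  Chronological G₁.tree G₂.tree f ∧
    (∀ t ∈ G₁.tree, ∀ s ∈ G₁.tree, f t = f s → t = s) ∧
    ∀ R ∈ Runs G₁.tree, ∀ S : ℕ → M₂, BarMapsTo f R S → (R ∈ G₁.payoff ↔ S ∈ G₂.payoff)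

/-- `f` is an isomorphism of games from `G₁` onto `G₂`: a game embedding that is
surjective onto the tree of `G₂`. -/
def IsGameIso {M₁ : Type u} {M₂ : Type v} (G₁ : Game M₁) (G₂ : Game M₂)
    (f : List M₁ → List M₂) : Prop :=
  IsGameEmbedding G₁ G₂ f ∧ ∀ s ∈ G₂.tree, ∃ t ∈ G₁.tree, f t = s

/-- The set of eventually-zero infinite sequences of natural numbers. -/
def c00 : Set (ℕ → ℕ) := {R | ∃ N : ℕ, ∀ n ≥ N, R n = 0}

/-- The game `G_FL = (ω^{<ω}, c₀₀)`. -/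
def GFL : Game ℕ where
  tree := Set.univ
  isGameTree := ⟨fun _ _ _ => trivial, fun _ _ => ⟨0, trivial⟩⟩
  payoff := c00
  payoff_subset := fun _ _ _ => trivial

/-- The map on runs induced by a (chronological) self-map of `ω^{<ω}`:
`runMapN f R` is the run `f̄(R)`, read off from the last entries of the images of
the finite prefixes of `R`. -/
def runMapN (f : List ℕ → List ℕ) (R : ℕ → ℕ) : ℕ → ℕ :=
  fun n => (f (runPrefix R (n + 1))).getD n 0

/-- The ultrametric `d` on `ℕ^ℕ`: `d(R,R') = 1/(Δ(R,R')+1)` for `R ≠ R'`. -/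
noncomputable def ddist (R R' : ℕ → ℕ) : ℝ :=
  letI : Decidable (R = R') := Classical.dec _
  if h : R = R' then 0
  else 1 / ((Nat.find (Function.ne_iff.mp h) + 1 : ℕ) : ℝ)


section Aux
open Classical

lemma runPrefix_length (R : ℕ → ℕ) (n : ℕ) : (runPrefix R n).length = n := by
  simp [runPrefix]

lemma runPrefix_getD (R : ℕ → ℕ) {m n : ℕ} (h : m < n) :
    (runPrefix R n).getD m 0 = R m := by
  simp [runPrefix, List.getD_eq_getElem?_getD, List.getElem?_map, List.getElem?_range h]

lemma runPrefix_take (R : ℕ → ℕ) (k n : ℕ) :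
    (runPrefix R n).take k = runPrefix R (min k n) := by
  simp [runPrefix, ← List.map_take, List.take_range]

lemma runPrefix_succ (R : ℕ → ℕ) (n : ℕ) :
    runPrefix R (n+1) = runPrefix R n ++ [R n] := by
  simp [runPrefix, List.range_succ]

lemma runPrefix_eq_iff {R S : ℕ → ℕ} {n : ℕ} :
    runPrefix R n = runPrefix S n ↔ ∀ m < n, R m = S m := by
  simp [runPrefix, List.map_eq_map_iff]

lemma runs_ext_ge {R S : ℕ → ℕ} {N : ℕ} (h : ∀ n ≥ N, runPrefix R n = runPrefix S n) :
    R = S := by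
  funext m
  exact runPrefix_eq_iff.mp (h (max (m+1) N) (le_max_right _ _)) m
    (lt_of_lt_of_le (Nat.lt_succ_self m) (le_max_left _ _))

lemma runs_ext {R S : ℕ → ℕ} (h : ∀ n, runPrefix R n = runPrefix S n) : R = S :=
  runs_ext_ge (N := 0) (fun n _ => h n)

lemma take_concat_getD (l : List ℕ) (n : ℕ) (h : n < l.length) :
    l.take (n+1) = l.take n ++ [l.getD n 0] := by
  rw [List.take_succ]
  congr 1
  simp [List.getD_eq_getElem?_getD, List.getElem?_eq_getElem h]

/-- Chronological self-maps of the full tree: length preservation. -/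
lemma chron_length {f : List ℕ → List ℕ} (hf : Chronological GFL.tree GFL.tree f)
    (t : List ℕ) : (f t).length = t.length := hf.2.1 t trivial

lemma chron_take {f : List ℕ → List ℕ} (hf : Chronological GFL.tree GFL.tree f)
    (t : List ℕ) (k : ℕ) : f (t.take k) = (f t).take k := hf.2.2 t trivial k

/-- `runMapN f R` realizes `f̄ R`. -/
lemma bar_runMapN {f : List ℕ → List ℕ} (hf : Chronological GFL.tree GFL.tree f)
    (R : ℕ → ℕ) : BarMapsTo f R (runMapN f R) := by
  intro n
  induction n with
  | zero =>
      have h0 : f [] = [] := List.length_eq_zero_iff.mp (by simpa using chron_length hf [])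
      simpa [runPrefix] using h0.symm
  | succ n ih =>
      have hlen : (f (runPrefix R (n+1))).length = n + 1 := by
        rw [chron_length hf, runPrefix_length]
      have htake : (f (runPrefix R (n+1))).take n = f (runPrefix R n) := by
        rw [← chron_take hf, runPrefix_take, min_eq_left (Nat.le_succ n)]
      calc runPrefix (runMapN f R) (n+1)
          = runPrefix (runMapN f R) n ++ [runMapN f R n] := runPrefix_succ _ _
        _ = (f (runPrefix R (n+1))).take n ++ [(f (runPrefix R (n+1))).getD n 0] := by
            rw [ih, htake]; rfl
        _ = (f (runPrefix R (n+1))).take (n+1) := (take_concat_getD _ _ (by omega)).symm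
        _ = f (runPrefix R (n+1)) := List.take_of_length_le (by omega)

lemma barMapsTo_unique {f : List ℕ → List ℕ} (hf : Chronological GFL.tree GFL.tree f)
    {R S : ℕ → ℕ} (h : BarMapsTo f R S) : S = runMapN f R :=
  runs_ext fun n => (h n).trans (bar_runMapN hf R n).symm

end Aux


section Aux2

/-- Eventually-zero extension of a finite sequence. -/
def extRun (t : List ℕ) : ℕ → ℕ := fun n => t.getD n 0

lemma extRun_mem_c00 (t : List ℕ) : extRun t ∈ c00 :=
  ⟨t.length, fun n hn => List.getD_eq_default _ _ hn⟩

lemma runPrefix_extRun {t : List ℕ} {n : ℕ} (h : n ≤ t.length) :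
    runPrefix (extRun t) n = t.take n := by
  apply List.ext_getElem
  · simp [runPrefix_length, h]
  · intro i h1 h2
    have hi : i < n := by simpa [runPrefix_length] using h1
    have hit : i < t.length := lt_of_lt_of_le hi h
    simp [runPrefix, extRun, List.getElem_take, List.getD_eq_getElem, hit]

lemma runPrefix_extRun_length (t : List ℕ) :
    runPrefix (extRun t) t.length = t := by
  rw [runPrefix_extRun le_rfl, List.take_length]

lemma extRun_runPrefix {R : ℕ → ℕ} {N n : ℕ} (hR : ∀ m ≥ N, R m = 0) (h : N ≤ n) :
    extRun (runPrefix R n) = R := by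
  funext m
  by_cases hm : m < n
  · exact (runPrefix_getD R hm : _)
  · push_neg at hm
    have : extRun (runPrefix R n) m = 0 :=
      List.getD_eq_default _ _ (by rw [runPrefix_length]; omega)
    rw [this, hR m (le_trans h hm)]

lemma prefix_eq_iff_le_find {x y : ℕ → ℕ} (h : x ≠ y) (n : ℕ) :
    (runPrefix x n = runPrefix y n) ↔ n ≤ Nat.find (Function.ne_iff.mp h) := by
  rw [runPrefix_eq_iff]
  constructor
  · intro H
    by_contra hn
    push_neg at hn
    exact Nat.find_spec (Function.ne_iff.mp h) (H _ hn)
  · intro hn m hm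
    by_contra hne
    exact absurd hn (by simpa using Nat.find_min' (Function.ne_iff.mp h) hne |>.trans_lt hm |>.not_ge)

lemma ddist_ne_zero {x y : ℕ → ℕ} (h : x ≠ y) : ddist x y ≠ 0 := by
  rw [ddist]
  rw [dif_neg h]
  positivity

lemma ddist_congr {x y u v : ℕ → ℕ}
    (H : ∀ n, (runPrefix x n = runPrefix y n ↔ runPrefix u n = runPrefix v n)) :
    ddist x y = ddist u v := by
  by_cases hxy : x = y
  · have huv : u = v := runs_ext fun n => (H n).mp (by rw [hxy])
    rw [ddist, ddist, dif_pos hxy, dif_pos huv]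
  · have huv : u ≠ v := fun he => hxy (runs_ext fun n => (H n).mpr (by rw [he]))
    rw [ddist, ddist, dif_neg hxy, dif_neg huv]
    have : Nat.find (Function.ne_iff.mp hxy) = Nat.find (Function.ne_iff.mp huv) := by
      apply le_antisymm
      · exact (prefix_eq_iff_le_find huv _).mp
          ((H _).mp ((prefix_eq_iff_le_find hxy _).mpr le_rfl))
      · exact (prefix_eq_iff_le_find hxy _).mp
          ((H _).mpr ((prefix_eq_iff_le_find huv _).mpr le_rfl))
    rw [this]

/-- For an isometry `h` of `c00`, prefixes of images agree iff prefixes agree. -/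
lemma isometry_prefix_iff {h : (ℕ → ℕ) → ℕ → ℕ}
    (hiso : ∀ x ∈ c00, ∀ y ∈ c00, ddist (h x) (h y) = ddist x y)
    {x y : ℕ → ℕ} (hx : x ∈ c00) (hy : y ∈ c00) (n : ℕ) :
    runPrefix (h x) n = runPrefix (h y) n ↔ runPrefix x n = runPrefix y n := by
  by_cases hxy : x = y
  · subst hxy; simp
  · have hd := hiso x hx y hy
    have hhxy : h x ≠ h y := by
      intro he
      apply ddist_ne_zero hxy
      rw [← hd, he, ddist, dif_pos rfl]
    rw [prefix_eq_iff_le_find hxy, prefix_eq_iff_le_find hhxy]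
    have hfind : Nat.find (Function.ne_iff.mp hhxy) = Nat.find (Function.ne_iff.mp hxy) := by
      have h3 := hd
      rw [ddist, ddist, dif_neg hxy, dif_neg hhxy] at h3
      rw [div_eq_div_iff (by positivity) (by positivity)] at h3
      have h4 : ((Nat.find (Function.ne_iff.mp hhxy) + 1 : ℕ) : ℝ)
          = ((Nat.find (Function.ne_iff.mp hxy) + 1 : ℕ) : ℝ) := by push_cast at h3 ⊢; linarith
      have h5 := Nat.cast_inj (R := ℝ) |>.mp h4
      omega
    rw [hfind]

end Aux2


section Aux3

lemma iso_runs (R : ℕ → ℕ) : R ∈ Runs GFL.tree := fun _ => trivial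

lemma iso_mapsTo {f : List ℕ → List ℕ} (hf : IsGameIso GFL GFL f)
    {x : ℕ → ℕ} (hx : x ∈ c00) : runMapN f x ∈ c00 :=
  (hf.1.2.2 x (iso_runs x) _ (bar_runMapN hf.1.1 x)).mp hx

lemma iso_prefix_iff {f : List ℕ → List ℕ} (hf : IsGameIso GFL GFL f)
    (x y : ℕ → ℕ) (n : ℕ) :
    runPrefix (runMapN f x) n = runPrefix (runMapN f y) n ↔
      runPrefix x n = runPrefix y n := by
  rw [bar_runMapN hf.1.1 x n, bar_runMapN hf.1.1 y n]
  exact ⟨fun he => hf.1.2.1 _ trivial _ trivial he, fun he => by rw [he]⟩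

end Aux3

/-- `f ↦ f̄↾c₀₀` is a group isomorphism from the automorphism group of
`G_FL` onto the group of bijective self-isometries of `(c₀₀, d)`:  it is
well-defined (sends automorphisms to bijective isometries of `c₀₀`), injective,
surjective, and it preserves composition. -/
theorem aut_GFL_iso_isometry_group_c00 :
    -- well-defined
    (∀ f : List ℕ → List ℕ, IsGameIso GFL GFL f →
      (∀ x ∈ c00, runMapN f x ∈ c00) ∧
      Set.BijOn (runMapN f) c00 c00 ∧
      ∀ x ∈ c00, ∀ y ∈ c00, ddist (runMapN f x) (runMapN f y) = ddist x y) ∧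
    -- injective
    (∀ f g : List ℕ → List ℕ, IsGameIso GFL GFL f → IsGameIso GFL GFL g →
      (∀ x ∈ c00, runMapN f x = runMapN g x) → f = g) ∧
    -- surjective
    (∀ h : (ℕ → ℕ) → ℕ → ℕ,
      Set.BijOn h c00 c00 →
      (∀ x ∈ c00, ∀ y ∈ c00, ddist (h x) (h y) = ddist x y) →
      ∃ f : List ℕ → List ℕ, IsGameIso GFL GFL f ∧ ∀ x ∈ c00, runMapN f x = h x) ∧
    -- multiplicative: composition of automorphisms corresponds to composition
    ∀ f g : List ℕ → List ℕ, IsGameIso GFL GFL f → IsGameIso GFL GFL g →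
      ∀ x ∈ c00, runMapN (f ∘ g) x = runMapN f (runMapN g x) := by
  refine ⟨?_, ?_, ?_, ?_⟩
  · -- well-defined
    intro f hf
    refine ⟨fun x hx => iso_mapsTo hf hx, ⟨fun x hx => iso_mapsTo hf hx, ?_, ?_⟩,
      fun x _ y _ => ddist_congr (iso_prefix_iff hf x y)⟩
    · -- InjOn
      intro x _ y _ he
      exact runs_ext fun n => (iso_prefix_iff hf x y n).mp (by rw [he])
    · -- SurjOn
      intro y hy
      choose t ht hft using fun n => hf.2 (runPrefix y n) trivial
      have hcoh : ∀ n, (t (n+1)).take n = t n := by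
        intro n
        apply hf.1.2.1 _ trivial _ trivial
        rw [chron_take hf.1.1, hft, hft, runPrefix_take, min_eq_left (Nat.le_succ n)]
      have hlen : ∀ n, (t n).length = n := by
        intro n
        have h1 := chron_length hf.1.1 (t n)
        rw [hft, runPrefix_length] at h1
        omega
      set x : ℕ → ℕ := fun n => (t (n+1)).getD n 0 with hxdef
      have hpx : ∀ n, runPrefix x n = t n := by
        intro n
        induction n with
        | zero =>
            have : t 0 = [] := List.length_eq_zero_iff.mp (hlen 0)
            simp [runPrefix, this]
        | succ n ih =>
            rw [runPrefix_succ, ih]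
            calc t n ++ [x n] = (t (n+1)).take n ++ [(t (n+1)).getD n 0] := by rw [hcoh]
              _ = (t (n+1)).take (n+1) := (take_concat_getD _ _ (by rw [hlen]; omega)).symm
              _ = t (n+1) := List.take_of_length_le (by rw [hlen])
      have hbar : BarMapsTo f x y := by
        intro n
        rw [hpx n, hft n]
      have hx : x ∈ c00 := (hf.1.2.2 x (iso_runs x) y hbar).mpr hy
      exact ⟨x, hx, (barMapsTo_unique hf.1.1 hbar).symm⟩
  · -- injective
    intro f g hf hg hagr
    funext s
    have h1 : f s = runPrefix (runMapN f (extRun s)) s.length := by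
      rw [bar_runMapN hf.1.1, runPrefix_extRun_length]
    have h2 : g s = runPrefix (runMapN g (extRun s)) s.length := by
      rw [bar_runMapN hg.1.1, runPrefix_extRun_length]
    rw [h1, h2, hagr (extRun s) (extRun_mem_c00 s)]
  · -- surjective
    intro h hbij hiso
    set f : List ℕ → List ℕ := fun t => runPrefix (h (extRun t)) t.length with hfdef
    have flen : ∀ t : List ℕ, (f t).length = t.length := fun t => runPrefix_length _ _
    have ftake : ∀ (t : List ℕ) (k : ℕ), f (t.take k) = (f t).take k := by
      intro t k
      by_cases hk : k ≤ t.length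
      · have h1 : (t.take k).length = k := by rw [List.length_take]; omega
        show runPrefix (h (extRun (t.take k))) (t.take k).length
            = (runPrefix (h (extRun t)) t.length).take k
        rw [h1, runPrefix_take, min_eq_left hk]
        apply (isometry_prefix_iff hiso (extRun_mem_c00 _) (extRun_mem_c00 _) k).mpr
        rw [runPrefix_extRun (le_of_eq h1.symm), runPrefix_extRun hk, List.take_take,
          min_self]
      · push_neg at hk
        rw [List.take_of_length_le hk.le, List.take_of_length_le (by rw [flen]; omega)]
    have hchron : Chronological GFL.tree GFL.tree f :=
      ⟨fun _ _ => trivial, fun t _ => flen t, fun t _ k => ftake t k⟩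
    have finj : ∀ t s : List ℕ, f t = f s → t = s := by
      intro t s he
      have hls : t.length = s.length := by
        have := congrArg List.length he
        rwa [flen, flen] at this
      have h1 : runPrefix (h (extRun t)) t.length = runPrefix (h (extRun s)) t.length := by
        conv_rhs => rw [hls]
        exact he
      have h2 := (isometry_prefix_iff hiso (extRun_mem_c00 t) (extRun_mem_c00 s)
        t.length).mp h1
      rw [runPrefix_extRun_length, hls, runPrefix_extRun_length] at h2
      exact h2
    -- key: the induced map agrees with h on c00
    have hkey : ∀ R ∈ c00, ∀ S : ℕ → ℕ, BarMapsTo f R S → S = h R := by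
      intro R hR S hS
      obtain ⟨N, hN⟩ := hR
      apply runs_ext_ge (N := N)
      intro n hn
      have h1 : extRun (runPrefix R n) = R := extRun_runPrefix hN hn
      rw [hS n]
      show runPrefix (h (extRun (runPrefix R n))) (runPrefix R n).length = _
      rw [h1, runPrefix_length]
    refine ⟨f, ⟨⟨hchron, fun t _ s _ => finj t s, ?_⟩, ?_⟩, ?_⟩
    · -- payoff iff
      intro R _ S hS
      constructor
      · intro hR
        rw [hkey R hR S hS]
        exact hbij.1 hR
      · intro hSc
        obtain ⟨x, hx, hhx⟩ := hbij.2.2 hSc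
        have hRx : R = x := by
          apply runs_ext
          intro n
          have h1 : runPrefix (h (extRun (runPrefix R n))) n = runPrefix (h x) n := by
            have h2 := hS n
            rw [hhx]
            show _ = runPrefix S n
            rw [h2]
            show runPrefix (h (extRun (runPrefix R n))) n
                = runPrefix (h (extRun (runPrefix R n))) (runPrefix R n).length
            rw [runPrefix_length]
          have h2 := (isometry_prefix_iff hiso (extRun_mem_c00 _) hx n).mp h1
          rw [runPrefix_extRun (by rw [runPrefix_length])] at h2
          rw [← h2, runPrefix_take, min_self]
        rw [hRx]
        exact hx
    · -- surjectivity onto the tree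
      intro s _
      obtain ⟨x, hx, hhx⟩ := hbij.2.2 (extRun_mem_c00 s)
      refine ⟨runPrefix x s.length, trivial, ?_⟩
      show runPrefix (h (extRun (runPrefix x s.length))) (runPrefix x s.length).length = s
      rw [runPrefix_length]
      have h1 : runPrefix (h (extRun (runPrefix x s.length))) s.length
          = runPrefix (h x) s.length := by
        apply (isometry_prefix_iff hiso (extRun_mem_c00 _) hx s.length).mpr
        rw [runPrefix_extRun (by rw [runPrefix_length]), runPrefix_take, min_self]
      rw [h1, hhx, runPrefix_extRun_length]
    · -- agreement on c00
      intro x hx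
      exact hkey x hx _ (bar_runMapN hchron x)
  · -- multiplicative
    intro f g hf hg x _
    have hfg : Chronological GFL.tree GFL.tree (f ∘ g) :=
      ⟨fun _ _ => trivial,
        fun t _ => by simp [Function.comp, chron_length hf.1.1, chron_length hg.1.1],
        fun t _ k => by
          simp only [Function.comp_apply]
          rw [chron_take hg.1.1, chron_take hf.1.1]⟩
    apply runs_ext
    intro n
    rw [bar_runMapN hfg x n, bar_runMapN hf.1.1 _ n, bar_runMapN hg.1.1 x n]
    rfl

end FraisseGames
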